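/- Let 0 < α < β < 1 and δ = β − α. For every μ₀ > 0 there exists M > 0 such that for every μ ≥ μ₀, ∫_{-∞}^{+∞} |T_μ(iy) · w(iy)| dy ≤ M · μ^{−1/(2−δ)}. (Lemma sol5.) -/

import Mathlib

open Complex Real MeasureTheory Set

private lemma Iy_ne_zero {y : ℝ} (hy : y ≠ 0) : Complex.I * (y : ℂ) ≠ 0 := by
  simp [Complex.I_ne_zero, hy]

private lemma abs_Iy {y : ℝ} (hy : 0 < y) : Norm.norm (Complex.I * (y : ℂ)) = y := by
  rw [norm_mul, Complex.norm_I, Complex.norm_real, one_mul, Real.norm_eq_abs, abs_of_pos hy]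

private lemma cpow_Iy {y : ℝ} (hy : 0 < y) (c : ℝ) :
    (Complex.I * (y : ℂ)) ^ (c : ℂ) =
      Complex.ofReal (y ^ c * Real.cos (c * (π / 2))) +
        Complex.ofReal (y ^ c * Real.sin (c * (π / 2))) * Complex.I := by
  have hz : Complex.I * (y : ℂ) ≠ 0 := Iy_ne_zero hy.ne'
  have hre : (Complex.I * (y : ℂ)).re = 0 := by simp
  have him : (Complex.I * (y : ℂ)).im = y := by simp
  have harg : Complex.arg (Complex.I * (y : ℂ)) = π / 2 :=
    Complex.arg_eq_pi_div_two_iff.2 ⟨hre, by rw [him]; exact hy⟩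
  have h1 : (Complex.log (Complex.I * (y : ℂ)) * (c : ℂ)).re = Real.log y * c := by
    simp [Complex.mul_re, Complex.log_re, Complex.log_im, abs_Iy hy]
  have h2 : (Complex.log (Complex.I * (y : ℂ)) * (c : ℂ)).im = c * (π / 2) := by
    simp [Complex.mul_im, Complex.log_re, Complex.log_im, harg]; ring
  have hyc : Real.exp (Real.log y * c) = y ^ c := (Real.rpow_def_of_pos hy c).symm
  rw [Complex.cpow_def_of_ne_zero hz]
  apply Complex.ext
  · rw [Complex.exp_re, h1, h2, hyc]
    simp only [Complex.add_re, Complex.ofReal_re, Complex.mul_re, Complex.I_re, Complex.I_im,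
      Complex.ofReal_im]
    ring
  · rw [Complex.exp_im, h1, h2, hyc]
    simp only [Complex.add_im, Complex.ofReal_im, Complex.mul_im, Complex.I_re, Complex.I_im,
      Complex.ofReal_re]
    ring

private lemma abs_cpow_Iy {y : ℝ} (hy : 0 < y) (c : ℝ) :
    Norm.norm ((Complex.I * (y : ℂ)) ^ (c : ℂ)) = y ^ c := by
  rw [Complex.norm_cpow_real, abs_Iy hy]

private lemma pointwise_bound (α β δ : ℝ) (hα : 0 < α) (hαβ : α < β) (hβ : β < 1)
    (hδ : δ = β - α) {μ : ℝ} (hμ : 0 < μ) {y : ℝ} (hy : 0 < y) :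
    Norm.norm
        (((Complex.I * y) ^ ((1 : ℂ) - (β : ℂ)) * ((Complex.I * y) ^ (α : ℂ) + 1) /
            ((Complex.I * y) ^ ((2 : ℂ) - (β : ℂ)) * ((Complex.I * y) ^ (α : ℂ) + 1) + (μ : ℂ))) *
          (1 / ((Complex.I * y) ^ ((1 : ℂ) - (α : ℂ)) * ((Complex.I * y) ^ (α : ℂ) + 1))))
      ≤ (4 / min (Real.sin (δ * (π / 2))) (Real.sin (β * (π / 2)))) *
        (|y| ^ (-δ) / (μ + |y| ^ (2 - δ))) := by
  have hδ0 : 0 < δ := by rw [hδ]; linarith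
  have hδ1 : δ < 1 := by rw [hδ]; linarith
  have hπ : 0 < π := Real.pi_pos
  have hsδ : 0 < Real.sin (δ * (π / 2)) :=
    Real.sin_pos_of_pos_of_lt_pi (by positivity) (by nlinarith)
  have hsβ : 0 < Real.sin (β * (π / 2)) :=
    Real.sin_pos_of_pos_of_lt_pi (by nlinarith) (by nlinarith)
  set s : ℝ := min (Real.sin (δ * (π / 2))) (Real.sin (β * (π / 2))) with hs_def
  have hs : 0 < s := lt_min hsδ hsβ
  have hs1 : s ≤ 1 := (min_le_right _ _).trans (Real.sin_le_one _)
  set z : ℂ := Complex.I * (y : ℂ) with hz_def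
  have hz : z ≠ 0 := Iy_ne_zero hy.ne'
  set B : ℂ := z ^ (α : ℂ) + 1 with hB_def
  have hBim : 0 < B.im := by
    rw [hB_def, cpow_Iy hy α]
    simp only [Complex.add_im, Complex.ofReal_im, Complex.mul_im, Complex.I_im, Complex.I_re,
      Complex.ofReal_re, Complex.one_im]
    have : 0 < Real.sin (α * (π / 2)) :=
      Real.sin_pos_of_pos_of_lt_pi (by positivity) (by nlinarith)
    have hyα : 0 < y ^ α := Real.rpow_pos_of_pos hy α
    simp only [mul_zero, zero_mul, mul_one, zero_add, add_zero]
    positivity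
  have hB0 : B ≠ 0 := by
    intro h; rw [h] at hBim; simp at hBim
  set D : ℂ := z ^ ((2 : ℂ) - (β : ℂ)) * B + (μ : ℂ) with hD_def
  have h2d : ((2 - δ : ℝ) : ℂ) = ((2 : ℂ) - (β : ℂ)) + (α : ℂ) := by
    rw [hδ]; push_cast; ring
  have hDeq : D = z ^ (((2 - δ : ℝ)) : ℂ) + z ^ (((2 - β : ℝ)) : ℂ) + (μ : ℂ) := by
    rw [hD_def, hB_def, h2d, Complex.cpow_add _ _ hz]
    have : ((2 - β : ℝ) : ℂ) = (2 : ℂ) - (β : ℂ) := by push_cast; ring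
    rw [this]; ring
  have hsin2δ : Real.sin ((2 - δ) * (π / 2)) = Real.sin (δ * (π / 2)) := by
    have : (2 - δ) * (π / 2) = π - δ * (π / 2) := by ring
    rw [this, Real.sin_pi_sub]
  have hsin2β : Real.sin ((2 - β) * (π / 2)) = Real.sin (β * (π / 2)) := by
    have : (2 - β) * (π / 2) = π - β * (π / 2) := by ring
    rw [this, Real.sin_pi_sub]
  have hcos2δ : Real.cos ((2 - δ) * (π / 2)) = -Real.cos (δ * (π / 2)) := by
    have : (2 - δ) * (π / 2) = π - δ * (π / 2) := by ring
    rw [this, Real.cos_pi_sub]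
  have hcos2β : Real.cos ((2 - β) * (π / 2)) = -Real.cos (β * (π / 2)) := by
    have : (2 - β) * (π / 2) = π - β * (π / 2) := by ring
    rw [this, Real.cos_pi_sub]
  have hDim : D.im = y ^ (2 - δ) * Real.sin (δ * (π / 2)) + y ^ (2 - β) * Real.sin (β * (π / 2)) := by
    rw [hDeq, cpow_Iy hy (2 - δ), cpow_Iy hy (2 - β)]
    simp only [Complex.add_im, Complex.ofReal_im, Complex.mul_im, Complex.I_im, Complex.I_re,
      Complex.ofReal_re, hsin2δ, hsin2β]
    ring
  have hDre : D.re = μ - y ^ (2 - δ) * Real.cos (δ * (π / 2)) - y ^ (2 - β) * Real.cos (β * (π / 2)) := by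
    rw [hDeq, cpow_Iy hy (2 - δ), cpow_Iy hy (2 - β)]
    simp only [Complex.add_re, Complex.ofReal_re, Complex.mul_re, Complex.I_im, Complex.I_re,
      Complex.ofReal_im, hcos2δ, hcos2β]
    ring
  have hp1 : 0 < y ^ (2 - δ) := Real.rpow_pos_of_pos hy _
  have hp2 : 0 < y ^ (2 - β) := Real.rpow_pos_of_pos hy _
  have habsD : s / 4 * (μ + y ^ (2 - δ)) ≤ Norm.norm D := by
    have hre_le : D.re ≤ Norm.norm D := Complex.re_le_norm D
    have him_le : D.im ≤ Norm.norm D := Complex.im_le_norm D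
    have hIm_ge : s * (y ^ (2 - δ) + y ^ (2 - β)) ≤ D.im := by
      rw [hDim]
      have h1 := min_le_left (Real.sin (δ * (π / 2))) (Real.sin (β * (π / 2)))
      have h2 := min_le_right (Real.sin (δ * (π / 2))) (Real.sin (β * (π / 2)))
      nlinarith
    have hRe_ge : μ - (y ^ (2 - δ) + y ^ (2 - β)) ≤ D.re := by
      rw [hDre]
      have h1 := Real.cos_le_one (δ * (π / 2))
      have h2 := Real.cos_le_one (β * (π / 2))
      nlinarith
    rcases le_or_gt (y ^ (2 - δ) + y ^ (2 - β)) (μ / 2) with hc | hc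
    · have h3 : s * (μ + y ^ (2 - δ)) ≤ 1 * (μ + y ^ (2 - δ)) :=
        mul_le_mul_of_nonneg_right hs1 (by positivity)
      linarith
    · have h4 : s * (μ + y ^ (2 - δ)) ≤ s * (4 * (y ^ (2 - δ) + y ^ (2 - β))) :=
        mul_le_mul_of_nonneg_left (by linarith) hs.le
      linarith
  have hD0 : D ≠ 0 := by
    intro h
    rw [h, norm_zero] at habsD
    nlinarith
  -- abs computation
  have hA : Norm.norm (z ^ ((1 : ℂ) - (β : ℂ))) = y ^ (1 - β) := by
    have : ((1 - β : ℝ) : ℂ) = (1 : ℂ) - (β : ℂ) := by push_cast; ring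
    rw [← this, abs_cpow_Iy hy]
  have hE : Norm.norm (z ^ ((1 : ℂ) - (α : ℂ))) = y ^ (1 - α) := by
    have : ((1 - α : ℝ) : ℂ) = (1 : ℂ) - (α : ℂ) := by push_cast; ring
    rw [← this, abs_cpow_Iy hy]
  have hBpos : 0 < Norm.norm B := norm_pos_iff.mpr hB0
  have habs_eq : Norm.norm ((z ^ ((1 : ℂ) - (β : ℂ)) * B / D) * (1 / (z ^ ((1 : ℂ) - (α : ℂ)) * B)))
      = y ^ (-δ) / Norm.norm D := by
    rw [norm_mul, norm_div, norm_div, norm_one, norm_mul, norm_mul, hA, hE]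
    have hyβ : 0 < y ^ (1 - β) := Real.rpow_pos_of_pos hy _
    have hyα : 0 < y ^ (1 - α) := Real.rpow_pos_of_pos hy _
    have hDpos : 0 < Norm.norm D := norm_pos_iff.mpr hD0
    have hpow : y ^ (1 - β) = y ^ (-δ) * y ^ (1 - α) := by
      rw [← Real.rpow_add hy]; congr 1; rw [hδ]; ring
    field_simp [hpow]
    rw [hpow]; ring
  rw [habs_eq, abs_of_pos hy]
  have hDpos : 0 < Norm.norm D := norm_pos_iff.mpr hD0
  have heq : 4 / s * (y ^ (-δ) / (μ + y ^ (2 - δ))) = y ^ (-δ) / (s / 4 * (μ + y ^ (2 - δ))) := by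
    field_simp
  rw [heq]
  gcongr

private lemma abs_expr_neg (α β μ : ℝ) (y : ℝ) :
    Norm.norm
        (((Complex.I * ((-y : ℝ) : ℂ)) ^ ((1 : ℂ) - (β : ℂ)) * ((Complex.I * ((-y : ℝ) : ℂ)) ^ (α : ℂ) + 1) /
            ((Complex.I * ((-y : ℝ) : ℂ)) ^ ((2 : ℂ) - (β : ℂ)) * ((Complex.I * ((-y : ℝ) : ℂ)) ^ (α : ℂ) + 1) + (μ : ℂ))) *
          (1 / ((Complex.I * ((-y : ℝ) : ℂ)) ^ ((1 : ℂ) - (α : ℂ)) * ((Complex.I * ((-y : ℝ) : ℂ)) ^ (α : ℂ) + 1))))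
      = Norm.norm
        (((Complex.I * (y : ℂ)) ^ ((1 : ℂ) - (β : ℂ)) * ((Complex.I * (y : ℂ)) ^ (α : ℂ) + 1) /
            ((Complex.I * (y : ℂ)) ^ ((2 : ℂ) - (β : ℂ)) * ((Complex.I * (y : ℂ)) ^ (α : ℂ) + 1) + (μ : ℂ))) *
          (1 / ((Complex.I * (y : ℂ)) ^ ((1 : ℂ) - (α : ℂ)) * ((Complex.I * (y : ℂ)) ^ (α : ℂ) + 1)))) := by
  have harg : (Complex.I * (y : ℂ)).arg ≠ π := by
    rw [Ne, Complex.arg_eq_pi_iff]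
    simp
  have hc : ∀ c : ℂ, (starRingEnd ℂ) c = c →
      (Complex.I * ((-y : ℝ) : ℂ)) ^ c = (starRingEnd ℂ) ((Complex.I * (y : ℂ)) ^ c) := by
    intro c hcc
    have hconj : (starRingEnd ℂ) (Complex.I * (y : ℂ)) = Complex.I * ((-y : ℝ) : ℂ) := by
      rw [map_mul, Complex.conj_I, Complex.conj_ofReal]
      push_cast
      ring
    rw [← hconj, Complex.conj_cpow _ _ harg, hcc]
  have h1 : (starRingEnd ℂ) ((1 : ℂ) - (β : ℂ)) = (1 : ℂ) - (β : ℂ) := by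
    rw [map_sub, map_one, Complex.conj_ofReal]
  have h2 : (starRingEnd ℂ) ((α : ℂ)) = (α : ℂ) := Complex.conj_ofReal α
  have h3 : (starRingEnd ℂ) ((2 : ℂ) - (β : ℂ)) = (2 : ℂ) - (β : ℂ) := by
    have h2' : ((2 : ℂ)) = ((2 : ℝ) : ℂ) := by norm_num
    rw [map_sub, h2', Complex.conj_ofReal, Complex.conj_ofReal]
  have h4 : (starRingEnd ℂ) ((1 : ℂ) - (α : ℂ)) = (1 : ℂ) - (α : ℂ) := by
    rw [map_sub, map_one, Complex.conj_ofReal]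
  rw [hc _ h1, hc _ h2, hc _ h3, hc _ h4]
  conv_rhs => rw [← Complex.norm_conj]
  congr 1
  simp only [map_mul, map_div₀, map_add, map_one, Complex.conj_ofReal]

private lemma g0_cont {δ : ℝ} (h0 : 0 < δ) {x : ℝ} (hx : x ≠ 0) :
    ContinuousAt (fun y : ℝ => |y| ^ (-δ) / (1 + |y| ^ (2 - δ))) x := by
  have habs : (|x| : ℝ) ≠ 0 := by simpa using hx
  have h1 : ContinuousAt (fun y : ℝ => |y| ^ (-δ)) x :=
    (Real.continuousAt_rpow_const |x| (-δ) (Or.inl habs)).comp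
      (_root_.continuous_abs.continuousAt)
  have h2 : ContinuousAt (fun y : ℝ => |y| ^ (2 - δ)) x :=
    (Real.continuousAt_rpow_const |x| (2 - δ) (Or.inl habs)).comp
      (_root_.continuous_abs.continuousAt)
  have hpos : 0 < |x| := abs_pos.2 hx
  exact h1.div (continuousAt_const.add h2) (by positivity)

private lemma g0_integrable {δ : ℝ} (h0 : 0 < δ) (h1 : δ < 1) :
    Integrable (fun y : ℝ => |y| ^ (-δ) / (1 + |y| ^ (2 - δ))) := by
  set g0 : ℝ → ℝ := fun y : ℝ => |y| ^ (-δ) / (1 + |y| ^ (2 - δ)) with hg0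
  have hIoc : IntegrableOn g0 (Ioc (0:ℝ) 1) := by
    have hbase : IntegrableOn (fun y : ℝ => y ^ (-δ)) (Ioc (0:ℝ) 1) := by
      have h := intervalIntegral.intervalIntegrable_rpow' (a := (0:ℝ)) (b := 1) (show (-1:ℝ) < -δ by linarith)
      rwa [intervalIntegrable_iff, uIoc_of_le (by norm_num : (0:ℝ) ≤ 1)] at h
    apply Integrable.mono hbase
    · exact ((continuousOn_of_forall_continuousAt fun x hx => g0_cont h0 (by exact ne_of_gt hx.1)).aestronglyMeasurable
        measurableSet_Ioc)
    · filter_upwards [ae_restrict_mem measurableSet_Ioc] with x hx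
      have hx0 : 0 < x := hx.1
      have hnn : 0 ≤ g0 x := by rw [hg0]; positivity
      rw [Real.norm_eq_abs, Real.norm_eq_abs, _root_.abs_of_nonneg hnn,
        _root_.abs_of_nonneg (Real.rpow_nonneg hx0.le _)]
      show |x| ^ (-δ) / (1 + |x| ^ (2 - δ)) ≤ x ^ (-δ)
      rw [abs_of_pos hx0]
      exact div_le_self (Real.rpow_nonneg hx0.le _)
        (le_add_of_nonneg_right (Real.rpow_nonneg hx0.le _))
  have hIoi1 : IntegrableOn g0 (Ioi (1:ℝ)) := by
    have hbase : IntegrableOn (fun y : ℝ => y ^ (-2 : ℝ)) (Ioi (1:ℝ)) :=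
      integrableOn_Ioi_rpow_of_lt (by norm_num) one_pos
    apply Integrable.mono hbase
    · exact ((continuousOn_of_forall_continuousAt fun x hx =>
        g0_cont h0 (ne_of_gt (lt_trans one_pos hx))).aestronglyMeasurable measurableSet_Ioi)
    · filter_upwards [ae_restrict_mem measurableSet_Ioi] with x hx
      have hx1 : 1 < x := hx
      have hx0 : 0 < x := lt_trans one_pos hx1
      have hnn : 0 ≤ g0 x := by rw [hg0]; positivity
      rw [Real.norm_eq_abs, Real.norm_eq_abs, _root_.abs_of_nonneg hnn,
        _root_.abs_of_nonneg (Real.rpow_nonneg hx0.le _)]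
      show |x| ^ (-δ) / (1 + |x| ^ (2 - δ)) ≤ x ^ (-2 : ℝ)
      rw [abs_of_pos hx0]
      have hre : x ^ (-2 : ℝ) = x ^ (-δ) / x ^ (2 - δ) := by
        rw [← Real.rpow_sub hx0]; congr 1; ring
      rw [hre]
      gcongr
      all_goals first
        | exact Real.rpow_nonneg hx0.le _
        | exact Real.rpow_pos_of_pos hx0 _
        | linarith [Real.rpow_nonneg hx0.le (2 - δ)]
  have hIoi : IntegrableOn g0 (Ioi (0:ℝ)) := by
    rw [show Ioi (0:ℝ) = Ioc 0 1 ∪ Ioi 1 from (Ioc_union_Ioi_eq_Ioi (by norm_num)).symm]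
    exact hIoc.union hIoi1
  have hIio : IntegrableOn g0 (Iio (0:ℝ)) := by
    rw [← (Measure.measurePreserving_neg (volume : Measure ℝ)).integrableOn_comp_preimage
      (Homeomorph.neg ℝ).measurableEmbedding]
    have hs : (Neg.neg : ℝ → ℝ) ⁻¹' (Iio (0:ℝ)) = Ioi 0 := by
      ext x; simp
    have hfun : g0 ∘ (Neg.neg : ℝ → ℝ) = g0 := by
      funext x
      simp [hg0, Function.comp, abs_neg]
    rw [hs, hfun]
    exact hIoi
  have hcompl : IntegrableOn g0 ({(0:ℝ)}ᶜ) := by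
    rw [← Iio_union_Ioi]
    exact hIio.union hIoi
  have : (volume : Measure ℝ) = volume.restrict ({(0:ℝ)}ᶜ) :=
    (MeasureTheory.restrict_compl_singleton (0:ℝ)).symm
  exact this ▸ hcompl

/-- Lemma sol5: for every `μ₀ > 0` there is `M > 0` such that for all `μ ≥ μ₀`,
`∫_{-∞}^{∞} |T_μ(iy) w(iy)| dy ≤ M μ^(-1/(2-δ))`, where
`T_μ(s) = s^(1-β)(s^α+1)/(s^(2-β)(s^α+1)+μ)` and `w(s) = 1/(s^(1-α)(s^α+1))`. -/
theorem integral_Tmu_w_bound (α β δ : ℝ) (hα : 0 < α) (hαβ : α < β) (hβ : β < 1)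
    (hδ : δ = β - α) (μ₀ : ℝ) (hμ₀ : 0 < μ₀) :
    ∃ M > 0, ∀ μ : ℝ, μ₀ ≤ μ →
      (∫ y : ℝ, Norm.norm
          (((Complex.I * y) ^ ((1 : ℂ) - (β : ℂ)) * ((Complex.I * y) ^ (α : ℂ) + 1) /
              ((Complex.I * y) ^ ((2 : ℂ) - (β : ℂ)) * ((Complex.I * y) ^ (α : ℂ) + 1) + (μ : ℂ))) *
            (1 / ((Complex.I * y) ^ ((1 : ℂ) - (α : ℂ)) * ((Complex.I * y) ^ (α : ℂ) + 1)))))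
        ≤ M * μ ^ (-(1 : ℝ) / (2 - δ)) := by
  have hδ0 : 0 < δ := by rw [hδ]; linarith
  have hδ1 : δ < 1 := by rw [hδ]; linarith
  have h2δ : (0:ℝ) < 2 - δ := by linarith
  have hπ : 0 < π := Real.pi_pos
  have hsδ : 0 < Real.sin (δ * (π / 2)) :=
    Real.sin_pos_of_pos_of_lt_pi (by nlinarith) (by nlinarith)
  have hsβ : 0 < Real.sin (β * (π / 2)) :=
    Real.sin_pos_of_pos_of_lt_pi (by nlinarith) (by nlinarith)
  set s : ℝ := min (Real.sin (δ * (π / 2))) (Real.sin (β * (π / 2))) with hs_def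
  have hs : 0 < s := lt_min hsδ hsβ
  set C : ℝ := 4 / s with hC_def
  have hC : 0 < C := by positivity
  have hg0int := g0_integrable hδ0 hδ1
  set I0 : ℝ := ∫ y : ℝ, |y| ^ (-δ) / (1 + |y| ^ (2 - δ)) with hI0_def
  have hI0 : 0 ≤ I0 := integral_nonneg fun y => by positivity
  refine ⟨C * (I0 + 1), by positivity, ?_⟩
  intro μ hμ
  have hμ0 : 0 < μ := lt_of_lt_of_le hμ₀ hμ
  set lam : ℝ := μ ^ ((1:ℝ) / (2 - δ)) with hlam_def
  have hlam : 0 < lam := Real.rpow_pos_of_pos hμ0 _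
  have hlam2 : lam ^ (2 - δ) = μ := by
    rw [hlam_def, ← Real.rpow_mul hμ0.le, one_div, inv_mul_cancel₀ (ne_of_gt h2δ), Real.rpow_one]
  -- pointwise identity relating the dominating function to the rescaled reference function
  have hg_eq : ∀ y : ℝ, C * (|y| ^ (-δ) / (μ + |y| ^ (2 - δ)))
      = (C * lam ^ (-δ) / μ) * (|lam⁻¹ * y| ^ (-δ) / (1 + |lam⁻¹ * y| ^ (2 - δ))) := by
    intro y
    rcases eq_or_ne y 0 with rfl | hy
    · simp [Real.zero_rpow (ne_of_gt hδ0), Real.zero_rpow (ne_of_lt (neg_neg_iff_pos.2 hδ0)),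
        Real.zero_rpow (ne_of_gt h2δ), abs_zero]
    · have hy0 : 0 < |y| := abs_pos.2 hy
      have h1 : |lam⁻¹ * y| = lam⁻¹ * |y| := by
        rw [abs_mul, abs_of_pos (inv_pos.2 hlam)]
      have h2 : (lam⁻¹ * |y|) ^ (-δ) = (lam ^ (-δ))⁻¹ * |y| ^ (-δ) := by
        rw [Real.mul_rpow (inv_nonneg.2 hlam.le) hy0.le, Real.inv_rpow hlam.le]
      have h3 : (lam⁻¹ * |y|) ^ (2 - δ) = μ⁻¹ * |y| ^ (2 - δ) := by
        rw [Real.mul_rpow (inv_nonneg.2 hlam.le) hy0.le, Real.inv_rpow hlam.le, hlam2]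
      rw [h1, h2, h3]
      have hlamδ : 0 < lam ^ (-δ) := Real.rpow_pos_of_pos hlam _
      have hB : 0 < |y| ^ (2 - δ) := Real.rpow_pos_of_pos hy0 _
      have hμB : 0 < μ + |y| ^ (2 - δ) := by positivity
      field_simp
  have hgint : Integrable (fun y : ℝ => C * (|y| ^ (-δ) / (μ + |y| ^ (2 - δ)))) := by
    simp only [hg_eq]
    exact (hg0int.comp_mul_left' (inv_ne_zero hlam.ne')).const_mul _
  have hmuexp : 0 < μ ^ (-(1:ℝ) / (2 - δ)) := Real.rpow_pos_of_pos hμ0 _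
  have hgval : (∫ y : ℝ, C * (|y| ^ (-δ) / (μ + |y| ^ (2 - δ))))
      = C * I0 * μ ^ (-(1:ℝ) / (2 - δ)) := by
    simp only [hg_eq]
    rw [MeasureTheory.integral_const_mul, Measure.integral_comp_mul_left
      (fun y : ℝ => |y| ^ (-δ) / (1 + |y| ^ (2 - δ))) lam⁻¹, inv_inv, abs_of_pos hlam,
      smul_eq_mul, ← hI0_def]
    have hkey : lam ^ (-δ) / μ * lam = μ ^ (-(1:ℝ) / (2 - δ)) := by
      have h1 : lam ^ (-δ) * lam = lam ^ (1 - δ) := by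
        nth_rewrite 2 [← Real.rpow_one lam]
        rw [← Real.rpow_add hlam]
        congr 1
        ring
      have h2 : lam ^ (1 - δ) = μ ^ ((1:ℝ) / (2 - δ) * (1 - δ)) := by
        rw [hlam_def, ← Real.rpow_mul hμ0.le]
      have h3 : μ ^ ((1:ℝ) / (2 - δ) * (1 - δ)) / μ = μ ^ (-(1:ℝ) / (2 - δ)) := by
        nth_rewrite 2 [← Real.rpow_one μ]
        rw [← Real.rpow_sub hμ0]
        congr 1
        field_simp
        ring
      rw [div_mul_eq_mul_div, h1, h2, h3]
    calc C * lam ^ (-δ) / μ * (lam * I0)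
        = C * I0 * (lam ^ (-δ) / μ * lam) := by ring
      _ = C * I0 * μ ^ (-(1:ℝ) / (2 - δ)) := by rw [hkey]
  have h0 : ∀ᵐ y : ℝ, y ≠ (0:ℝ) := by
    rw [ae_iff]
    have hset : {y : ℝ | ¬ y ≠ 0} = {(0:ℝ)} := by ext x; simp
    rw [hset]
    exact measure_singleton 0
  have hae : ∀ᵐ y : ℝ,
      Norm.norm
          (((Complex.I * y) ^ ((1 : ℂ) - (β : ℂ)) * ((Complex.I * y) ^ (α : ℂ) + 1) /
              ((Complex.I * y) ^ ((2 : ℂ) - (β : ℂ)) * ((Complex.I * y) ^ (α : ℂ) + 1) + (μ : ℂ))) *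
            (1 / ((Complex.I * y) ^ ((1 : ℂ) - (α : ℂ)) * ((Complex.I * y) ^ (α : ℂ) + 1))))
        ≤ C * (|y| ^ (-δ) / (μ + |y| ^ (2 - δ))) := by
    filter_upwards [h0] with y hy
    rcases hy.lt_or_gt with hneg | hpos
    · have h := pointwise_bound α β δ hα hαβ hβ hδ hμ0 (show (0:ℝ) < -y by linarith)
      have hsym := abs_expr_neg α β μ y
      rw [← hsym]
      rw [abs_neg] at h
      exact h
    · exact pointwise_bound α β δ hα hαβ hβ hδ hμ0 hpos
  calc (∫ y : ℝ, Norm.norm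
          (((Complex.I * y) ^ ((1 : ℂ) - (β : ℂ)) * ((Complex.I * y) ^ (α : ℂ) + 1) /
              ((Complex.I * y) ^ ((2 : ℂ) - (β : ℂ)) * ((Complex.I * y) ^ (α : ℂ) + 1) + (μ : ℂ))) *
            (1 / ((Complex.I * y) ^ ((1 : ℂ) - (α : ℂ)) * ((Complex.I * y) ^ (α : ℂ) + 1)))))
      ≤ ∫ y : ℝ, C * (|y| ^ (-δ) / (μ + |y| ^ (2 - δ))) :=
        integral_mono_of_nonneg (Filter.Eventually.of_forall fun y => norm_nonneg _)
          hgint hae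
    _ = C * I0 * μ ^ (-(1:ℝ) / (2 - δ)) := hgval
    _ ≤ C * (I0 + 1) * μ ^ (-(1:ℝ) / (2 - δ)) := by nlinarith
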